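/- Let d ≥ 1 and let e₁, e₂, e₃, e₄ be real-valued Schwartz eigenfunctions of H with respective eigenvalues μ₁², μ₂², μ₃², μ₄² satisfying μ₁² ≠ μ₂² + μ₃² + μ₄². Then ∫_{ℝ^d} e₁e₂e₃e₄ dx = −2(μ₁² − μ₂² − μ₃² − μ₄²)^{−1} [ ∫_{ℝ^d} (∇e₂·∇e₃) e₁e₄ dx + ∫_{ℝ^d} (∇e₂·∇e₄) e₁e₃ dx + ∫_{ℝ^d} (∇e₃·∇e₄) e₁e₂ dx + ∫_{ℝ^d} |x|² e₁e₂e₃e₄ dx ]. -/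

import Mathlib

open MeasureTheory Complex
open scoped BigOperators ComplexConjugate

noncomputable section

abbrev ESp (d : ℕ) := EuclideanSpace ℝ (Fin d)

/-- Partial derivative in the `j`-th coordinate direction. -/
def pd {F : Type*} [NormedAddCommGroup F] [NormedSpace ℝ F] (d : ℕ) (j : Fin d)
    (f : ESp d → F) : ESp d → F :=
  fun x => fderiv ℝ f x (EuclideanSpace.single j 1)

/-- The Laplacian. -/
def lap {F : Type*} [NormedAddCommGroup F] [NormedSpace ℝ F] (d : ℕ)
    (f : ESp d → F) : ESp d → F :=
  fun x => ∑ j : Fin d, pd d j (pd d j f) x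

/-- The quantum harmonic oscillator `H f = -Δ f + |x|² f`. -/
def Hop {F : Type*} [NormedAddCommGroup F] [NormedSpace ℝ F] (d : ℕ)
    (f : ESp d → F) : ESp d → F :=
  fun x => - lap d f x + (‖x‖ ^ 2 : ℝ) • f x

/-- `e` is a Schwartz eigenfunction of `H` with eigenvalue `μ²`, `μ > 0`. -/
def IsEigen {F : Type*} [NormedAddCommGroup F] [NormedSpace ℝ F] (d : ℕ) (μ : ℝ)
    (e : ESp d → F) : Prop :=
  0 < μ ∧ (∃ φ : SchwartzMap (ESp d) F, ⇑φ = e) ∧ ∀ x, Hop d e x = (μ ^ 2) • e x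

/-- The family `e` with square-root eigenvalues `μ` is spectrally localized at scale `N`. -/
def Localized (d : ℕ) (N : ℝ) {m : ℕ} (μ : Fin m → ℝ) (e : Fin m → ESp d → ℂ) : Prop :=
  ∀ j, IsEigen d (μ j) (e j) ∧ N ≤ μ j ∧ μ j ≤ 2 * N

/-- The linear Hermite–Schrödinger evolution `e^{-itH} (∑ⱼ eⱼ)`. -/
def evol {d m : ℕ} (μ : Fin m → ℝ) (e : Fin m → ESp d → ℂ) (t : ℝ) (x : ESp d) : ℂ :=
  ∑ j, Complex.exp (-(Complex.I * (t : ℂ) * ((μ j : ℂ)) ^ 2)) * e j x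

/-- The `L²(ℝ^d)` norm. -/
def L2 {F : Type*} [NormedAddCommGroup F] (d : ℕ) (f : ESp d → F) : ℝ :=
  (∫ x : ESp d, ‖f x‖ ^ 2) ^ ((1 : ℝ) / 2)

/-- The space-time `L²([0,T] × ℝ^d)` norm. -/
def stL2 (d : ℕ) (T : ℝ) (G : ℝ → ESp d → ℂ) : ℝ :=
  (∫ t in (0:ℝ)..T, ∫ x : ESp d, ‖G t x‖ ^ 2) ^ ((1 : ℝ) / 2)


section Auxiliary

/-- Schwartz-hood predicate. -/
def IsS (d : ℕ) (f : ESp d → ℝ) : Prop := ∃ φ : SchwartzMap (ESp d) ℝ, ⇑φ = f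

variable {d : ℕ}

lemma schwartz_temperate (φ : SchwartzMap (ESp d) ℝ) : Function.HasTemperateGrowth ⇑φ := by
  refine ⟨φ.smooth', fun n => ⟨0, (φ.decay' 0 n).choose, fun x => ?_⟩⟩
  have := (φ.decay' 0 n).choose_spec x
  simp at this ⊢
  exact this

lemma IsS.mul {f g : ESp d → ℝ} (hf : IsS d f) (hg : IsS d g) :
    IsS d (fun x => f x * g x) := by
  obtain ⟨φ, rfl⟩ := hf; obtain ⟨ψ, rfl⟩ := hg
  exact ⟨SchwartzMap.bilinLeftCLM (ContinuousLinearMap.mul ℝ ℝ) (schwartz_temperate ψ) φ, rfl⟩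

lemma IsS.pd {f : ESp d → ℝ} (hf : IsS d f) (j : Fin d) : IsS d (pd d j f) := by
  obtain ⟨φ, rfl⟩ := hf
  exact ⟨LineDeriv.lineDerivOp (EuclideanSpace.single j 1 : ESp d) φ, rfl⟩

lemma IsS.add {f g : ESp d → ℝ} (hf : IsS d f) (hg : IsS d g) :
    IsS d (fun x => f x + g x) := by
  obtain ⟨φ, rfl⟩ := hf; obtain ⟨ψ, rfl⟩ := hg
  exact ⟨φ + ψ, rfl⟩

lemma IsS.differentiable {f : ESp d → ℝ} (hf : IsS d f) : Differentiable ℝ f := by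
  obtain ⟨φ, rfl⟩ := hf; exact φ.differentiable

lemma IsS.integrable {f : ESp d → ℝ} (hf : IsS d f) : Integrable f := by
  obtain ⟨φ, rfl⟩ := hf; exact φ.integrable

lemma IsS.sum {f : Fin d → ESp d → ℝ} (hf : ∀ j, IsS d (f j)) :
    IsS d (fun x => ∑ j, f j x) := by
  classical
  suffices h : ∀ s : Finset (Fin d), IsS d (fun x => ∑ j ∈ s, f j x) from h _
  intro s
  induction s using Finset.induction with
  | empty => exact ⟨0, by funext x; simp⟩
  | @insert j s hj ih =>
      have := (hf j).add ih
      refine this.imp fun φ hφ => ?_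
      funext x
      simp only [hφ]
      rw [Finset.sum_insert hj]

lemma IsS.integrable_normsq_mul {f : ESp d → ℝ} (hf : IsS d f) :
    Integrable (fun x : ESp d => ‖x‖ ^ 2 * f x) := by
  obtain ⟨φ, rfl⟩ := hf
  refine (φ.integrable_pow_mul volume 2).mono' ?_ ?_
  · exact ((continuous_norm.pow 2).mul φ.continuous).aestronglyMeasurable
  · filter_upwards with x
    simp [abs_mul, _root_.abs_of_nonneg (by positivity : (0:ℝ) ≤ ‖x‖ ^ 2)]

lemma pd_mul {f g : ESp d → ℝ} (hf : Differentiable ℝ f) (hg : Differentiable ℝ g)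
    (j : Fin d) (x : ESp d) :
    pd d j (fun y => f y * g y) x = pd d j f x * g x + f x * pd d j g x := by
  simp only [pd]
  rw [fderiv_fun_mul (hf x) (hg x)]
  simp only [ContinuousLinearMap.add_apply, ContinuousLinearMap.smul_apply, smul_eq_mul]
  ring

lemma pd_add {f g : ESp d → ℝ} (hf : Differentiable ℝ f) (hg : Differentiable ℝ g)
    (j : Fin d) (x : ESp d) :
    pd d j (fun y => f y + g y) x = pd d j f x + pd d j g x := by
  simp only [pd]
  rw [fderiv_fun_add (hf x) (hg x)]
  simp

lemma pdpd_mul {f g : ESp d → ℝ} (hf : IsS d f) (hg : IsS d g) (j : Fin d) (x : ESp d) :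
    pd d j (pd d j (fun y => f y * g y)) x
      = pd d j (pd d j f) x * g x + 2 * (pd d j f x * pd d j g x)
        + f x * pd d j (pd d j g) x := by
  have h1 : pd d j (fun y => f y * g y)
      = fun y => pd d j f y * g y + f y * pd d j g y :=
    funext (pd_mul hf.differentiable hg.differentiable j)
  rw [h1]
  calc pd d j (fun y => pd d j f y * g y + f y * pd d j g y) x
      = pd d j (fun y => pd d j f y * g y) x + pd d j (fun y => f y * pd d j g y) x :=
        pd_add ((hf.pd j).mul hg).differentiable (hf.mul (hg.pd j)).differentiable j x
    _ = (pd d j (pd d j f) x * g x + pd d j f x * pd d j g x)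
        + (pd d j f x * pd d j g x + f x * pd d j (pd d j g) x) := by
        rw [pd_mul (hf.pd j).differentiable hg.differentiable,
          pd_mul hf.differentiable (hg.pd j).differentiable]
    _ = _ := by ring

lemma lap_mul {f g : ESp d → ℝ} (hf : IsS d f) (hg : IsS d g) (x : ESp d) :
    lap d (fun y => f y * g y) x
      = lap d f x * g x + 2 * ∑ j : Fin d, pd d j f x * pd d j g x
        + f x * lap d g x := by
  simp only [lap, pdpd_mul hf hg]
  rw [Finset.sum_add_distrib, Finset.sum_add_distrib, ← Finset.sum_mul, ← Finset.mul_sum,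
    ← Finset.mul_sum]

lemma IsS.lap {f : ESp d → ℝ} (hf : IsS d f) : IsS d (lap d f) :=
  IsS.sum (fun j => (hf.pd j).pd j)

lemma ibp {f g : ESp d → ℝ} (hf : IsS d f) (hg : IsS d g) (j : Fin d) :
    ∫ x : ESp d, f x * pd d j (pd d j g) x = ∫ x : ESp d, pd d j (pd d j f) x * g x := by
  have A : ∫ x : ESp d, f x * pd d j (pd d j g) x
      = - ∫ x : ESp d, pd d j f x * pd d j g x :=
    integral_mul_fderiv_eq_neg_fderiv_mul_of_integrable
      ((hf.pd j).mul (hg.pd j)).integrable (hf.mul ((hg.pd j).pd j)).integrable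
      (hf.mul (hg.pd j)).integrable (fun x _ => hf.differentiable x) (fun x _ => (hg.pd j).differentiable x)
  have B : ∫ x : ESp d, g x * pd d j (pd d j f) x
      = - ∫ x : ESp d, pd d j g x * pd d j f x :=
    integral_mul_fderiv_eq_neg_fderiv_mul_of_integrable
      ((hg.pd j).mul (hf.pd j)).integrable (hg.mul ((hf.pd j).pd j)).integrable
      (hg.mul (hf.pd j)).integrable (fun x _ => hg.differentiable x) (fun x _ => (hf.pd j).differentiable x)
  have C1 : (fun x : ESp d => pd d j (pd d j f) x * g x)
      = fun x => g x * pd d j (pd d j f) x := by funext x; ring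
  have C2 : (fun x : ESp d => pd d j f x * pd d j g x)
      = fun x => pd d j g x * pd d j f x := by funext x; ring
  rw [A, C1, B, C2]

lemma ibp_lap {f g : ESp d → ℝ} (hf : IsS d f) (hg : IsS d g) :
    ∫ x : ESp d, f x * lap d g x = ∫ x : ESp d, lap d f x * g x := by
  have h1 : (fun x : ESp d => f x * lap d g x)
      = fun x => ∑ j : Fin d, f x * pd d j (pd d j g) x :=
    funext fun x => by rw [lap, Finset.mul_sum]
  have h2 : (fun x : ESp d => lap d f x * g x)
      = fun x => ∑ j : Fin d, pd d j (pd d j f) x * g x :=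
    funext fun x => by rw [lap, Finset.sum_mul]
  rw [h1, h2, integral_finset_sum _ (fun j _ => (hf.mul ((hg.pd j).pd j)).integrable),
    integral_finset_sum _ (fun j _ => ((((hf.pd j)).pd j).mul hg).integrable)]
  exact Finset.sum_congr rfl fun j _ => ibp hf hg j

lemma eigen_lap {μ : ℝ} {e : ESp d → ℝ} (h : IsEigen d μ e) (x : ESp d) :
    lap d e x = ‖x‖ ^ 2 * e x - μ ^ 2 * e x := by
  have := h.2.2 x
  simp only [Hop, smul_eq_mul] at this
  linarith

end Auxiliary

/-- First-step spectral-interaction identity for four eigenfunctions of `H`. -/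
theorem stmt17 (d : ℕ) (hd : 1 ≤ d) (μ₁ μ₂ μ₃ μ₄ : ℝ) (e₁ e₂ e₃ e₄ : ESp d → ℝ)
    (h₁ : IsEigen d μ₁ e₁) (h₂ : IsEigen d μ₂ e₂) (h₃ : IsEigen d μ₃ e₃)
    (h₄ : IsEigen d μ₄ e₄) (hne : μ₁ ^ 2 ≠ μ₂ ^ 2 + μ₃ ^ 2 + μ₄ ^ 2) :
    ∫ x : ESp d, e₁ x * e₂ x * e₃ x * e₄ x
      = -2 / (μ₁ ^ 2 - μ₂ ^ 2 - μ₃ ^ 2 - μ₄ ^ 2)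
        * ((∫ x : ESp d, (∑ j : Fin d, pd d j e₂ x * pd d j e₃ x) * (e₁ x * e₄ x))
          + (∫ x : ESp d, (∑ j : Fin d, pd d j e₂ x * pd d j e₄ x) * (e₁ x * e₃ x))
          + (∫ x : ESp d, (∑ j : Fin d, pd d j e₃ x * pd d j e₄ x) * (e₁ x * e₂ x))
          + ∫ x : ESp d, ‖x‖ ^ 2 * (e₁ x * e₂ x * e₃ x * e₄ x)) := by
  classical
  have s1 : IsS d e₁ := h₁.2.1
  have s2 : IsS d e₂ := h₂.2.1
  have s3 : IsS d e₃ := h₃.2.1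
  have s4 : IsS d e₄ := h₄.2.1
  have s23 : IsS d (fun x => e₂ x * e₃ x) := s2.mul s3
  have sg : IsS d (fun x => e₂ x * e₃ x * e₄ x) := s23.mul s4
  have sF : IsS d (fun x => e₁ x * e₂ x * e₃ x * e₄ x) := ((s1.mul s2).mul s3).mul s4
  have hcne : μ₁ ^ 2 - μ₂ ^ 2 - μ₃ ^ 2 - μ₄ ^ 2 ≠ 0 := fun h => hne (by linarith)
  have hsum : ∀ x : ESp d, (∑ j : Fin d, pd d j (fun y => e₂ y * e₃ y) x * pd d j e₄ x)
      = (∑ j : Fin d, pd d j e₂ x * pd d j e₄ x) * e₃ x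
        + (∑ j : Fin d, pd d j e₃ x * pd d j e₄ x) * e₂ x := by
    intro x
    rw [Finset.sum_mul, Finset.sum_mul, ← Finset.sum_add_distrib]
    refine Finset.sum_congr rfl fun j _ => ?_
    rw [pd_mul s2.differentiable s3.differentiable]
    ring
  have L1 : (fun x : ESp d => e₁ x * lap d (fun y => e₂ y * e₃ y * e₄ y) x
        - lap d e₁ x * (e₂ x * e₃ x * e₄ x))
      = fun x : ESp d => (μ₁ ^ 2 - μ₂ ^ 2 - μ₃ ^ 2 - μ₄ ^ 2) * (e₁ x * e₂ x * e₃ x * e₄ x)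
        + 2 * ((∑ j : Fin d, pd d j e₂ x * pd d j e₃ x) * (e₁ x * e₄ x)
          + (∑ j : Fin d, pd d j e₂ x * pd d j e₄ x) * (e₁ x * e₃ x)
          + (∑ j : Fin d, pd d j e₃ x * pd d j e₄ x) * (e₁ x * e₂ x)
          + ‖x‖ ^ 2 * (e₁ x * e₂ x * e₃ x * e₄ x)) := by
    funext x
    rw [lap_mul s23 s4, lap_mul s2 s3, hsum, eigen_lap h₁, eigen_lap h₂, eigen_lap h₃,
      eigen_lap h₄]
    beta_reduce
    ring
  have key : ∫ x : ESp d, e₁ x * lap d (fun y => e₂ y * e₃ y * e₄ y) x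
      = ∫ x : ESp d, lap d e₁ x * (e₂ x * e₃ x * e₄ x) := ibp_lap s1 sg
  have hzero : ∫ x : ESp d, (e₁ x * lap d (fun y => e₂ y * e₃ y * e₄ y) x
      - lap d e₁ x * (e₂ x * e₃ x * e₄ x)) = 0 := by
    rw [integral_sub (s1.mul sg.lap).integrable (s1.lap.mul sg).integrable, key, sub_self]
  rw [L1] at hzero
  have iF : Integrable (fun x : ESp d => e₁ x * e₂ x * e₃ x * e₄ x) := sF.integrable
  have iG1 : Integrable (fun x : ESp d =>
      (∑ j : Fin d, pd d j e₂ x * pd d j e₃ x) * (e₁ x * e₄ x)) :=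
    ((IsS.sum fun j => (s2.pd j).mul (s3.pd j)).mul (s1.mul s4)).integrable
  have iG2 : Integrable (fun x : ESp d =>
      (∑ j : Fin d, pd d j e₂ x * pd d j e₄ x) * (e₁ x * e₃ x)) :=
    ((IsS.sum fun j => (s2.pd j).mul (s4.pd j)).mul (s1.mul s3)).integrable
  have iG3 : Integrable (fun x : ESp d =>
      (∑ j : Fin d, pd d j e₃ x * pd d j e₄ x) * (e₁ x * e₂ x)) :=
    ((IsS.sum fun j => (s3.pd j).mul (s4.pd j)).mul (s1.mul s2)).integrable
  have iG4 : Integrable (fun x : ESp d => ‖x‖ ^ 2 * (e₁ x * e₂ x * e₃ x * e₄ x)) :=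
    sF.integrable_normsq_mul
  have iA12 : Integrable (fun x : ESp d =>
      (∑ j : Fin d, pd d j e₂ x * pd d j e₃ x) * (e₁ x * e₄ x)
        + (∑ j : Fin d, pd d j e₂ x * pd d j e₄ x) * (e₁ x * e₃ x)) := iG1.add iG2
  have iA123 : Integrable (fun x : ESp d =>
      (∑ j : Fin d, pd d j e₂ x * pd d j e₃ x) * (e₁ x * e₄ x)
        + (∑ j : Fin d, pd d j e₂ x * pd d j e₄ x) * (e₁ x * e₃ x)
        + (∑ j : Fin d, pd d j e₃ x * pd d j e₄ x) * (e₁ x * e₂ x)) := iA12.add iG3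
  have iK : Integrable (fun x : ESp d =>
      (∑ j : Fin d, pd d j e₂ x * pd d j e₃ x) * (e₁ x * e₄ x)
        + (∑ j : Fin d, pd d j e₂ x * pd d j e₄ x) * (e₁ x * e₃ x)
        + (∑ j : Fin d, pd d j e₃ x * pd d j e₄ x) * (e₁ x * e₂ x)
        + ‖x‖ ^ 2 * (e₁ x * e₂ x * e₃ x * e₄ x)) := iA123.add iG4
  have i1 : Integrable (fun x : ESp d =>
      (μ₁ ^ 2 - μ₂ ^ 2 - μ₃ ^ 2 - μ₄ ^ 2) * (e₁ x * e₂ x * e₃ x * e₄ x)) :=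
    iF.const_mul _
  have i2 : Integrable (fun x : ESp d =>
      2 * ((∑ j : Fin d, pd d j e₂ x * pd d j e₃ x) * (e₁ x * e₄ x)
        + (∑ j : Fin d, pd d j e₂ x * pd d j e₄ x) * (e₁ x * e₃ x)
        + (∑ j : Fin d, pd d j e₃ x * pd d j e₄ x) * (e₁ x * e₂ x)
        + ‖x‖ ^ 2 * (e₁ x * e₂ x * e₃ x * e₄ x))) := iK.const_mul 2
  rw [integral_add i1 i2, integral_const_mul, integral_const_mul,
    integral_add iA123 iG4, integral_add iA12 iG3, integral_add iG1 iG2] at hzero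
  rw [div_mul_eq_mul_div, eq_div_iff hcne]
  linarith
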